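/- There exists a function f : [0,1]² → [0,1] that is continuum-preserving but not connectedness-preserving. -/

import Mathlib

open Set Cardinal Topology Function

namespace CPNC
noncomputable section


abbrev P : Type := ↥(Set.Icc (0:ℝ) 1)
abbrev T : Type := P × P

instance : PolishSpace P := isClosed_Icc.polishSpace
instance : CompactSpace P := isCompact_iff_compactSpace.mp isCompact_Icc

lemma mk_P : #P = 𝔠 := Cardinal.mk_Icc_real one_pos

lemma mk_T : #T = 𝔠 := by
  rw [Cardinal.mk_prod]
  simp [mk_P, Cardinal.continuum_mul_self]

lemma not_countable_of_continuum_le {α : Type} {s : Set α} (h : 𝔠 ≤ #s) : ¬ s.Countable := by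
  intro hc
  rw [← Set.countable_coe_iff, ← Cardinal.mk_le_aleph0_iff] at hc
  exact absurd (h.trans hc) (by simp [Cardinal.aleph0_lt_continuum.not_ge])

lemma mk_cantor : #(ℕ → Bool) = 𝔠 := by
  simp [Cardinal.mk_arrow, Cardinal.two_power_aleph0]

lemma continuum_le_of_closed_unc {K : Set T} (hK : IsClosed K) (h : ¬ K.Countable) :
    𝔠 ≤ #K := by
  obtain ⟨f, hfr, -, hfi⟩ := hK.exists_nat_bool_injection_of_not_countable h
  rw [← mk_cantor]
  exact Cardinal.mk_le_of_injective (f := fun a => (⟨f a, hfr ⟨a, rfl⟩⟩ : K))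
    (fun a b hab => hfi (congrArg Subtype.val hab))

lemma mk_closed_unc {K : Set T} (hK : IsClosed K) (h : ¬ K.Countable) : #K = 𝔠 := by
  refine le_antisymm ?_ (continuum_le_of_closed_unc hK h)
  rw [← mk_T]
  exact Cardinal.mk_set_le K






/-- merge two sequences -/
def merge (a b : ℕ → Bool) : ℕ → Bool := fun n => if Even n then a (n/2) else b (n/2)

lemma merge_even (a b : ℕ → Bool) (n : ℕ) : merge a b (2*n) = a n := by
  simp [merge, even_two_mul, Nat.mul_div_cancel_left _ (by norm_num : 0 < 2)]

lemma merge_odd (a b : ℕ → Bool) (n : ℕ) : merge a b (2*n+1) = b n := by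
  have : ¬ Even (2*n+1) := by simp [Nat.even_add_one, Nat.even_mul]
  simp [merge, this, Nat.mul_add_div (by norm_num : 0 < 2)]

lemma uncountable_cantor : ¬ (Set.univ : Set (ℕ → Bool)).Countable := by
  rw [← Set.countable_coe_iff, ← Cardinal.mk_le_aleph0_iff]
  intro h
  rw [Cardinal.mk_univ] at h
  have : #(ℕ → Bool) = 𝔠 := by simp [Cardinal.mk_arrow, Cardinal.two_power_aleph0]
  rw [this] at h
  exact absurd (Cardinal.aleph0_lt_continuum.trans_le h) (lt_irrefl _)

/-- every closed uncountable subset contains 𝔠 pairwise disjoint closed uncountable subsets -/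
lemma exists_disjoint_slices {K : Set T} (hK : IsClosed K) (h : ¬ K.Countable) :
    ∃ C : (ℕ → Bool) → Set T,
      (∀ a, IsClosed (C a) ∧ ¬ (C a).Countable ∧ C a ⊆ K) ∧
      (∀ a a', a ≠ a' → Disjoint (C a) (C a')) := by
  obtain ⟨f, hfr, hfc, hfi⟩ := hK.exists_nat_bool_injection_of_not_countable h
  set S : (ℕ → Bool) → Set (ℕ → Bool) := fun a => {x | ∀ n, x (2*n) = a n} with hS
  have hScl : ∀ a, IsCompact (S a) := by
    intro a
    apply IsClosed.isCompact
    have : S a = ⋂ n, (fun x : ℕ → Bool => x (2*n)) ⁻¹' {a n} := by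
      ext x; simp [hS]
    rw [this]
    exact isClosed_iInter fun n => IsClosed.preimage (continuous_apply _) isClosed_singleton
  refine ⟨fun a => f '' S a, fun a => ⟨?_, ?_, ?_⟩, ?_⟩
  · exact ((hScl a).image hfc).isClosed
  · intro hcc
    have hSc : (S a).Countable := (hcc.preimage hfi).mono fun x hx => Set.subset_preimage_image f _ hx
    have : (Set.univ : Set (ℕ → Bool)).Countable := by
      have hinj : Function.Injective (merge a) := by
        intro b b' hb
        funext n
        have := congrFun hb (2*n+1)
        rwa [merge_odd, merge_odd] at this
      have hmem : ∀ b, merge a b ∈ S a := fun b n => merge_even a b n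
      have : (Set.univ : Set (ℕ → Bool)) ⊆ merge a ⁻¹' (S a) := fun b _ => hmem b
      exact (hSc.preimage hinj).mono this
    exact uncountable_cantor this
  · exact (Set.image_subset_range f _).trans hfr
  · intro a a' haa
    rw [Set.disjoint_left]
    rintro t ⟨x, hx, rfl⟩ ⟨x', hx', hxx⟩
    apply haa
    funext n
    have := hfi hxx
    rw [← hx n, ← hx' n, this]

/-- the collection of closed subsets of T has cardinality at most continuum -/
lemma mk_closeds : #{K : Set T // IsClosed K} ≤ 𝔠 := by
  classical
  set Φ : {K : Set T // IsClosed K} → Set ↥(TopologicalSpace.countableBasis T) :=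
    fun K => {b | ((b : Set T) ∩ K.1).Nonempty} with hΦ
  have key : ∀ K K' : {K : Set T // IsClosed K}, Φ K = Φ K' → K.1 ⊆ K'.1 := by
    intro K K' hKK t ht
    by_contra htK
    obtain ⟨b, hb, htb, hbsub⟩ :=
      (TopologicalSpace.isBasis_countableBasis T).exists_subset_of_mem_open htK K'.2.isOpen_compl
    have : (⟨b, hb⟩ : ↥(TopologicalSpace.countableBasis T)) ∈ Φ K := ⟨t, htb, ht⟩
    rw [hKK] at this
    obtain ⟨s, hsb, hsK⟩ := this
    exact hbsub hsb hsK
  have hinj : Function.Injective Φ := fun K K' h =>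
    Subtype.ext (le_antisymm (key K K' h) (key K' K h.symm))
  calc #{K : Set T // IsClosed K} ≤ #(Set ↥(TopologicalSpace.countableBasis T)) :=
        Cardinal.mk_le_of_injective hinj
    _ = 2 ^ #↥(TopologicalSpace.countableBasis T) := Cardinal.mk_set
    _ ≤ 2 ^ ℵ₀ := by
        apply Cardinal.power_le_power_left (by norm_num)
        rw [Cardinal.mk_le_aleph0_iff, Set.countable_coe_iff]
        exact TopologicalSpace.countable_countableBasis T
    _ = 𝔠 := Cardinal.two_power_aleph0




abbrev I : Type := Cardinal.continuum.ord.ToType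

lemma mk_I : #I = 𝔠 := by rw [Cardinal.mk_ord_toType]

instance : Nonempty I := by
  rw [← Cardinal.mk_ne_zero_iff, mk_I]
  exact Cardinal.continuum_ne_zero

lemma exists_surj (β : Type) [Nonempty β] (h : #β ≤ 𝔠) : ∃ τ : I → β, Surjective τ := by
  rw [← mk_I, Cardinal.le_def] at h
  obtain ⟨e⟩ := h
  exact ⟨Function.invFun e, Function.invFun_surjective e.injective⟩

lemma rec_choice {α : Type} (A : I → Set α) (hA : ∀ i, 𝔠 ≤ #(A i)) :
    ∃ g : I → α, (∀ i, g i ∈ A i) ∧ Function.Injective g := by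
  classical
  have key : ∀ (i : I) (prev : Set.Iio i → α), ∃ t, t ∈ A i ∧ ∀ j, t ≠ prev j := by
    intro i prev
    have hlt : #(Set.range prev) < 𝔠 :=
      (Cardinal.mk_range_le).trans_lt (Cardinal.mk_Iio_ord_toType i)
    by_contra hem
    push_neg at hem
    have hsub : A i ⊆ Set.range prev := by
      intro t ht
      obtain ⟨j, hj⟩ := hem t ht
      exact ⟨j, hj.symm⟩
    exact absurd ((hA i).trans (Cardinal.mk_le_mk_of_subset hsub)) hlt.not_ge
  let g : I → α := WellFounded.fix (wellFounded_lt)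
    (fun i rec => Classical.choose (key i (fun j => rec j.1 j.2)))
  have hg : ∀ i, g i = Classical.choose (key i (fun j : Set.Iio i => g j.1)) := by
    intro i
    exact WellFounded.fix_eq _ _ _
  have hmem : ∀ i, g i ∈ A i ∧ ∀ j : Set.Iio i, g i ≠ g j.1 := by
    intro i
    rw [hg i]
    exact Classical.choose_spec (key i _)
  refine ⟨g, fun i => (hmem i).1, ?_⟩
  intro i j hij
  rcases lt_trichotomy i j with h | h | h
  · exact absurd hij.symm ((hmem j).2 ⟨i, h⟩)
  · exact h
  · exact absurd hij ((hmem i).2 ⟨j, h⟩)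




lemma not_countable_Icc {a b : ℝ} (h : a < b) : ¬ (Set.Icc a b).Countable := by
  rw [← Set.countable_coe_iff, ← Cardinal.mk_le_aleph0_iff, Cardinal.mk_Icc_real h]
  exact Cardinal.aleph0_lt_continuum.not_ge

lemma exists_notin_countable {S : Set ℝ} (hS : S.Countable) :
    ∃ u ∈ Set.Icc (0:ℝ) 1, u ∉ S := by
  by_contra hem
  push_neg at hem
  exact not_countable_Icc one_pos (hS.mono hem)

/-- square minus countable set is preconnected, in ℝ × ℝ -/
lemma sq_diff_countable_preconn (S : Set (ℝ × ℝ)) (hS : S.Countable) :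
    IsPreconnected ((Set.Icc (0:ℝ) 1 ×ˢ Set.Icc (0:ℝ) 1) \ S) := by
  set Q : Set (ℝ × ℝ) := Set.Icc (0:ℝ) 1 ×ˢ Set.Icc (0:ℝ) 1 with hQ
  have hQconv : Convex ℝ Q := (convex_Icc _ _).prod (convex_Icc _ _)
  apply isPreconnected_of_forall_pair
  intro x hx y hy
  -- choose the first coordinate u of the middle point
  obtain ⟨u, huI, huS⟩ : ∃ u ∈ Set.Icc (0:ℝ) 1, u ∉ ({x.1, y.1} : Set ℝ) :=
    exists_notin_countable ((Set.countable_singleton _).insert _)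
  have hux : u ≠ x.1 := fun h => huS (by simp [h])
  have huy : u ≠ y.1 := fun h => huS (by simp [h])
  -- bad second coordinates
  set vbad : (ℝ × ℝ) → (ℝ × ℝ) → ℝ :=
    fun w s => w.2 + (s.2 - w.2) * (u - w.1) / (s.1 - w.1) with hvbad
  obtain ⟨v, hvI, hvS⟩ : ∃ v ∈ Set.Icc (0:ℝ) 1, v ∉ (vbad x) '' S ∪ (vbad y) '' S :=
    exists_notin_countable ((hS.image _).union (hS.image _))
  set z : ℝ × ℝ := (u, v) with hz
  have hzQ : z ∈ Q := ⟨huI, hvI⟩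
  have seg_avoid : ∀ w : ℝ × ℝ, w ∉ S → w.1 ≠ u → v ∉ (vbad w) '' S →
      ∀ s ∈ segment ℝ w z, s ∉ S := by
    intro w hwS hwu hwv s hseg hsS
    rw [segment_eq_image'] at hseg
    obtain ⟨c, hc, rfl⟩ := hseg
    have hc0 : c ≠ 0 := by
      rintro rfl
      simp only [zero_smul, add_zero] at hsS
      exact hwS hsS
    have hu0 : u - w.1 ≠ 0 := sub_ne_zero.2 (Ne.symm hwu)
    apply hwv
    refine ⟨w + c • (z - w), hsS, ?_⟩
    simp only [hvbad, hz, Prod.fst_add, Prod.snd_add, Prod.smul_fst, Prod.smul_snd,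
      Prod.fst_sub, Prod.snd_sub, smul_eq_mul]
    rw [show w.1 + c * ((u, v).1 - w.1) - w.1 = c * (u - w.1) by simp,
      show w.2 + c * ((u, v).2 - w.2) - w.2 = c * (v - w.2) by simp]
    field_simp
    ring
  have havoid_x : ∀ s ∈ segment ℝ x z, s ∉ S :=
    seg_avoid x hx.2 (Ne.symm hux) (fun h => hvS (Or.inl h))
  have havoid_y : ∀ s ∈ segment ℝ y z, s ∉ S :=
    seg_avoid y hy.2 (Ne.symm huy) (fun h => hvS (Or.inr h))
  refine ⟨segment ℝ x z ∪ segment ℝ z y, ?_, ?_, ?_, ?_⟩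
  · rintro s (hs | hs)
    · exact ⟨hQconv.segment_subset hx.1 hzQ hs, havoid_x s hs⟩
    · exact ⟨hQconv.segment_subset hzQ hy.1 hs,
        havoid_y s (by rwa [segment_symm])⟩
  · exact Or.inl (left_mem_segment ℝ x z)
  · exact Or.inr (right_mem_segment ℝ z y)
  · exact IsPreconnected.union z (right_mem_segment ℝ x z) (left_mem_segment ℝ z y)
      (convex_segment x z).isPreconnected (convex_segment z y).isPreconnected






lemma not_countable_Icc' {a b : ℝ} (h : a < b) : ¬ (Set.Icc a b).Countable := by
  rw [← Set.countable_coe_iff, ← Cardinal.mk_le_aleph0_iff, Cardinal.mk_Icc_real h]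
  exact Cardinal.aleph0_lt_continuum.not_ge

def emb : T → ℝ × ℝ := fun a => (a.1.1, a.2.1)

lemma emb_embedding : Topology.IsEmbedding emb :=
  Topology.IsEmbedding.prodMap Topology.IsEmbedding.subtypeVal Topology.IsEmbedding.subtypeVal

lemma emb_inj : Function.Injective emb := emb_embedding.injective

lemma emb_range : Set.range emb = Set.Icc (0:ℝ) 1 ×ˢ Set.Icc (0:ℝ) 1 := by
  ext p
  constructor
  · rintro ⟨⟨a, b⟩, rfl⟩
    exact ⟨a.2, b.2⟩
  · rintro ⟨h1, h2⟩
    exact ⟨(⟨p.1, h1⟩, ⟨p.2, h2⟩), rfl⟩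

/-- preconnectedness of the complement of a countable subset of the square -/
lemma compl_countable_preconn {S : Set T} (hS : S.Countable) : IsPreconnected Sᶜ := by
  rw [← emb_embedding.isInducing.isPreconnected_image]
  have himg : emb '' Sᶜ = (Set.Icc (0:ℝ) 1 ×ˢ Set.Icc (0:ℝ) 1) \ (emb '' S) := by
    rw [← emb_range]
    ext p
    constructor
    · rintro ⟨t, ht, rfl⟩
      exact ⟨⟨t, rfl⟩, fun ⟨s, hs, hst⟩ => ht (emb_inj hst ▸ hs)⟩
    · rintro ⟨⟨t, rfl⟩, hp⟩
      exact ⟨t, fun ht => hp ⟨t, ht, rfl⟩, rfl⟩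
  rw [himg]
  exact sq_diff_countable_preconn _ (hS.image _)

/-- a preconnected set with two points is uncountable -/
lemma not_countable_of_preconn {C : Set T} (hC : IsPreconnected C) {a b : T}
    (ha : a ∈ C) (hb : b ∈ C) (hab : a ≠ b) : ¬ C.Countable := by
  intro hcc
  have hcont : ContinuousOn (fun p => dist p a) C := (continuous_id.dist continuous_const).continuousOn
  have himg : IsPreconnected ((fun p => dist p a) '' C) := hC.image _ hcont
  have h0 : (0:ℝ) ∈ (fun p => dist p a) '' C := ⟨a, ha, dist_self a⟩
  have hd : dist b a ∈ (fun p => dist p a) '' C := ⟨b, hb, rfl⟩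
  have hsub := himg.Icc_subset h0 hd
  have : (Set.Icc (0:ℝ) (dist b a)).Countable := (hcc.image _).mono hsub
  exact not_countable_Icc' (dist_pos.2 hab.symm) this

/-- each nonempty open subset of the square contains a closed uncountable set -/
lemma exists_closed_unc_subset {O : Set T} (hO : IsOpen O) (hne : O.Nonempty) :
    ∃ K : Set T, IsClosed K ∧ ¬ K.Countable ∧ K ⊆ O := by
  obtain ⟨t, ht⟩ := hne
  set γ : P → T := fun s => (s, t.2) with hγ
  have hγc : Continuous γ := Continuous.prodMk continuous_id continuous_const
  have hγinj : Function.Injective γ := fun s s' h => (Prod.ext_iff.1 h).1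
  have hopen : IsOpen (γ ⁻¹' O) := hO.preimage hγc
  have htm : t.1 ∈ γ ⁻¹' O := by simpa [hγ] using ht
  obtain ⟨ε, hε, hball⟩ := Metric.isOpen_iff.1 hopen t.1 htm
  set a : ℝ := (t.1 : ℝ) with ha
  have haI : a ∈ Set.Icc (0:ℝ) 1 := t.1.2
  set c : ℝ := max 0 (a - ε/2) with hc
  set d : ℝ := min 1 (a + ε/2) with hd
  have hca : c ≤ a := max_le haI.1 (by linarith)
  have had : a ≤ d := le_min haI.2 (by linarith)
  have hcd : c < d := by
    rcases lt_or_ge c d with h | h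
    · exact h
    · exfalso
      have h1 : c = a := le_antisymm hca (had.trans h)
      have h2 : a = d := le_antisymm had (h.trans hca)
      have ha0 : a = 0 := by
        rcases max_choice 0 (a - ε/2) with hm | hm
        · rw [hc, hm] at h1; linarith
        · rw [hc, hm] at h1; linarith
      have ha1 : a = 1 := by
        rcases min_choice 1 (a + ε/2) with hm | hm
        · rw [hd, hm] at h2; linarith
        · rw [hd, hm] at h2; linarith
      linarith
  set KP : Set P := {s : P | (s:ℝ) ∈ Set.Icc c d} with hKP
  have hKPc : IsClosed KP := isClosed_Icc.preimage continuous_subtype_val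
  have hKPb : KP ⊆ γ ⁻¹' O := by
    intro s hs
    apply hball
    rw [Metric.mem_ball, Subtype.dist_eq, Real.dist_eq]
    have hb1 : a - ε/2 ≤ c := le_max_right _ _
    have hb2 : d ≤ a + ε/2 := min_le_right _ _
    rw [abs_sub_lt_iff]
    constructor <;> simp only [← ha] <;> linarith [hs.1, hs.2]
  have hKPunc : ¬ KP.Countable := by
    intro hcc
    apply not_countable_Icc' hcd
    have : Set.Icc c d ⊆ Subtype.val '' KP := by
      intro r hr
      have hrI : r ∈ Set.Icc (0:ℝ) 1 :=
        ⟨(le_max_left 0 _).trans hr.1, hr.2.trans (min_le_left 1 _)⟩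
      exact ⟨⟨r, hrI⟩, hr, rfl⟩
    exact ((hcc.image _).mono this)
  refine ⟨γ '' KP, ?_, ?_, ?_⟩
  · exact ((hKPc.isCompact).image hγc).isClosed
  · intro hcc
    exact hKPunc (((hcc.preimage hγinj)).mono (Set.subset_preimage_image _ _))
  · exact (Set.image_mono hKPb).trans (Set.image_preimage_subset _ _)


def O0 : P := ⟨0, by norm_num⟩
def I1 : P := ⟨1, by norm_num⟩

lemma slice_mem (r : ℝ) (hr : r ∈ Set.Icc (0:ℝ) 1) :
    IsClosed {t : T | (t.1 : ℝ) = r} ∧ ¬ {t : T | (t.1 : ℝ) = r}.Countable := by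
  constructor
  · have : {t : T | (t.1 : ℝ) = r} = (fun t : T => (t.1 : ℝ)) ⁻¹' {r} := rfl
    rw [this]
    exact isClosed_singleton.preimage (continuous_subtype_val.comp continuous_fst)
  · apply not_countable_of_continuum_le
    rw [← mk_P]
    apply Cardinal.mk_le_of_injective
      (f := fun w : P => (⟨((⟨r, hr⟩ : P), w), rfl⟩ : {t : T | (t.1 : ℝ) = r}))
    intro w w' h
    exact (Prod.ext_iff.1 (congrArg Subtype.val h)).2

lemma main : ∃ f : T → P,
    (∀ C : Set T, IsCompact C → IsConnected C → IsCompact (f '' C) ∧ IsConnected (f '' C)) ∧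
    ¬ ∀ A : Set T, IsConnected A → IsConnected (f '' A) := by
  classical
  set 𝒦 : Set (Set T) := {K | IsClosed K ∧ ¬ K.Countable} with h𝒦
  have hKuniv : (Set.univ : Set T) ∈ 𝒦 := by
    refine ⟨isClosed_univ, not_countable_of_continuum_le ?_⟩
    rw [Cardinal.mk_univ, mk_T]
  haveI h𝒦ne : Nonempty ↥𝒦 := ⟨⟨_, hKuniv⟩⟩
  have hmk𝒦 : #↥𝒦 ≤ 𝔠 := by
    refine le_trans (Cardinal.mk_le_of_injective
      (f := fun K : ↥𝒦 => (⟨K.1, K.2.1⟩ : {K : Set T // IsClosed K})) ?_) mk_closeds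
    intro K K' h
    simp only [Subtype.mk.injEq] at h
    exact Subtype.ext h
  -- Bernstein-type set B
  haveI : Nonempty (↥𝒦 × Bool) := ⟨⟨Classical.arbitrary _, true⟩⟩
  obtain ⟨τ, hτ⟩ := exists_surj (↥𝒦 × Bool) (by
    rw [Cardinal.mk_prod]
    simp only [Cardinal.lift_id]
    calc #↥𝒦 * #Bool ≤ 𝔠 * 𝔠 :=
          mul_le_mul' hmk𝒦 ((Cardinal.mk_le_aleph0).trans Cardinal.aleph0_le_continuum)
      _ = 𝔠 := Cardinal.continuum_mul_self)
  obtain ⟨g, hgmem, hginj⟩ := rec_choice (fun i => ((τ i).1.1 : Set T))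
    (fun i => continuum_le_of_closed_unc (τ i).1.2.1 (τ i).1.2.2)
  set B : Set T := g '' {i | (τ i).2 = true} with hB
  have hBmeet : ∀ K ∈ 𝒦, (K ∩ B).Nonempty := by
    intro K hK
    obtain ⟨i, hi⟩ := hτ (⟨K, hK⟩, true)
    refine ⟨g i, ?_, ⟨i, ?_, rfl⟩⟩
    · have := hgmem i
      rw [hi] at this
      exact this
    · rw [Set.mem_setOf_eq, hi]
  have hBdiff : ∀ K ∈ 𝒦, (K \ B).Nonempty := by
    intro K hK
    obtain ⟨i, hi⟩ := hτ (⟨K, hK⟩, false)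
    refine ⟨g i, ?_, ?_⟩
    · have := hgmem i
      rw [hi] at this
      exact this
    · rintro ⟨j, hj, hji⟩
      rw [Set.mem_setOf_eq, hginj hji, hi] at hj
      simp at hj
  have hmkdiff : ∀ K ∈ 𝒦, 𝔠 ≤ #(K \ B : Set T) := by
    intro K hK
    obtain ⟨C, hC, hCdisj⟩ := exists_disjoint_slices hK.1 hK.2
    have pick : ∀ a : ℕ → Bool, ∃ t, t ∈ C a \ B := fun a =>
      hBdiff (C a) ⟨(hC a).1, (hC a).2.1⟩
    choose pickf hpick using pick
    rw [← mk_cantor]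
    apply Cardinal.mk_le_of_injective
      (f := fun a => (⟨pickf a, (hC a).2.2 (hpick a).1, (hpick a).2⟩ : ↥(K \ B)))
    intro a a' haa'
    by_contra hne
    have h1 : pickf a ∈ C a := (hpick a).1
    have h2 : pickf a ∈ C a' := by
      have := congrArg Subtype.val haa'
      simp only at this
      rw [this]
      exact (hpick a').1
    exact Set.disjoint_left.1 (hCdisj a a' hne) h1 h2
  -- B is preconnected
  have hBpre : IsPreconnected B := by
    rintro u v hu hv hsub ⟨p1, hp1B, hp1u⟩ ⟨p2, hp2B, hp2v⟩
    by_contra hemp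
    rcases Set.eq_empty_or_nonempty (u ∩ v) with huv | huv
    · have hWc : ((u ∪ v)ᶜ : Set T).Countable := by
        by_contra hcc
        obtain ⟨t, htK, htB⟩ := hBmeet _ ⟨(hu.union hv).isClosed_compl, hcc⟩
        exact htK (hsub htB)
      have hpre := compl_countable_preconn hWc
      rw [compl_compl] at hpre
      obtain ⟨t, -, htuv⟩ := hpre u v hu hv (subset_refl _)
        ⟨p1, hsub hp1B, hp1u⟩ ⟨p2, hsub hp2B, hp2v⟩
      rw [huv] at htuv
      exact htuv
    · obtain ⟨K, hKc, hKu, hKsub⟩ := exists_closed_unc_subset (hu.inter hv) huv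
      obtain ⟨t, htK, htB⟩ := hBmeet K ⟨hKc, hKu⟩
      exact hemp ⟨t, htB, hKsub htK⟩
  -- two points of B
  obtain ⟨b0, hb0K, hb0B⟩ := hBmeet _ (slice_mem 0 (by norm_num))
  obtain ⟨b1, hb1K, hb1B⟩ := hBmeet _ (slice_mem 1 (by norm_num))
  rw [Set.mem_setOf_eq] at hb0K hb1K
  have hb01 : b1 ≠ b0 := by
    intro h
    rw [h] at hb1K
    rw [hb0K] at hb1K
    norm_num at hb1K
  -- the transversal x
  haveI : Nonempty (↥𝒦 × P) := ⟨⟨Classical.arbitrary _, O0⟩⟩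
  obtain ⟨σ, hσ⟩ := exists_surj (↥𝒦 × P) (by
    rw [Cardinal.mk_prod]
    simp only [Cardinal.lift_id]
    calc #↥𝒦 * #P ≤ 𝔠 * 𝔠 := mul_le_mul' hmk𝒦 (le_of_eq mk_P)
      _ = 𝔠 := Cardinal.continuum_mul_self)
  obtain ⟨x, hxmem, hxinj⟩ := rec_choice (fun i => ((σ i).1.1 : Set T) \ B)
    (fun i => hmkdiff _ (σ i).1.2)
  set f : T → P := fun t =>
    if h : ∃ i, x i = t then (σ (Classical.choose h)).2
    else if t ∈ B ∧ t ≠ b0 then I1 else O0 with hf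
  have hxB : ∀ i, x i ∉ B := fun i => (hxmem i).2
  have hfB : ∀ t ∈ B, f t = if t = b0 then O0 else I1 := by
    intro t htB
    rw [hf]
    have hnx : ¬ ∃ i, x i = t := fun ⟨i, hi⟩ => hxB i (hi.symm ▸ htB)
    simp only [dif_neg hnx]
    by_cases ht0 : t = b0
    · simp [ht0]
    · simp [ht0, htB]
  have hfx : ∀ i, f (x i) = (σ i).2 := by
    intro i
    rw [hf]
    have h : ∃ j, x j = x i := ⟨i, rfl⟩
    simp only [dif_pos h]
    rw [hxinj (Classical.choose_spec h)]
  refine ⟨f, ?_, ?_⟩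
  · -- continuum preserving
    intro C hCcomp hCconn
    by_cases hsing : ∃ a ∈ C, ∃ b ∈ C, a ≠ b
    · obtain ⟨a, ha, b, hb, hab⟩ := hsing
      have hCK : C ∈ 𝒦 := ⟨hCcomp.isClosed, not_countable_of_preconn hCconn.2 ha hb hab⟩
      have himg : f '' C = Set.univ := by
        rw [Set.eq_univ_iff_forall]
        intro w
        obtain ⟨i, hi⟩ := hσ (⟨C, hCK⟩, w)
        have hxC : x i ∈ C := by
          have := (hxmem i).1
          rw [hi] at this
          exact this
        exact ⟨x i, hxC, by rw [hfx i, hi]⟩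
      rw [himg]
      exact ⟨isCompact_univ, isConnected_univ⟩
    · push_neg at hsing
      obtain ⟨t, ht⟩ := hCconn.nonempty
      have hCt : C = {t} := Set.eq_singleton_iff_unique_mem.2 ⟨ht, fun s hs => hsing s hs t ht⟩
      rw [hCt, Set.image_singleton]
      exact ⟨isCompact_singleton, isConnected_singleton⟩
  · -- not connectedness preserving
    intro hall
    have hBconn : IsConnected B := ⟨⟨b0, hb0B⟩, hBpre⟩
    have himg := hall B hBconn
    have hsub : Subtype.val '' (f '' B) ⊆ {(0:ℝ), 1} := by
      rintro r ⟨w, ⟨t, htB, rfl⟩, rfl⟩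
      rw [hfB t htB]
      by_cases h : t = b0 <;> simp [h, O0, I1]
    have h0 : (0:ℝ) ∈ Subtype.val '' (f '' B) :=
      ⟨O0, ⟨b0, hb0B, by rw [hfB b0 hb0B]; simp⟩, rfl⟩
    have h1 : (1:ℝ) ∈ Subtype.val '' (f '' B) :=
      ⟨I1, ⟨b1, hb1B, by rw [hfB b1 hb1B]; simp [hb01]⟩, rfl⟩
    have hpre : IsPreconnected (Subtype.val '' (f '' B)) :=
      Topology.IsInducing.subtypeVal.isPreconnected_image.mpr himg.2
    have hmem := hpre.Icc_subset h0 h1 (show (1/2:ℝ) ∈ Set.Icc (0:ℝ) 1 by norm_num)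
    rcases hsub hmem with h | h <;> norm_num at h

end
end CPNC

theorem exists_continuumP_not_connP_on_square :
    ∃ f : Set.Icc (0:ℝ) 1 × Set.Icc (0:ℝ) 1 → Set.Icc (0:ℝ) 1,
      (∀ C : Set (Set.Icc (0:ℝ) 1 × Set.Icc (0:ℝ) 1), IsCompact C → IsConnected C →
        IsCompact (f '' C) ∧ IsConnected (f '' C)) ∧
      ¬ ∀ A : Set (Set.Icc (0:ℝ) 1 × Set.Icc (0:ℝ) 1), IsConnected A →
          IsConnected (f '' A) := CPNC.main
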